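/- Let (Ω, F, V, T) be an upper probability preserving system such that V(A) ∈ {0, 1} for every A ∈ I. Then for every A ∈ I with V(A) = 1 there exists A' ∈ I with A' ⊆ A and V(A') = 1 such that for every B ∈ I with B ⊆ A' and V(B) = 1 one has V(A' ∖ B) = 0. -/
import Mathlib


open MeasureTheory Set Filter Topology ENNReal NNReal

variable {Ω : Type*}

/-- The core of a set function `V` : all countably additive probability measures dominated
by `V` on measurable sets. -/
def UpperCore [MeasurableSpace Ω] (V : Set Ω → ℝ) : Set (Measure Ω) :=
  {P | IsProbabilityMeasure P ∧ ∀ A : Set Ω, MeasurableSet A → (P A).toReal ≤ V A}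

/-- `V` is an upper probability: monotone, normalized, attained as the sup over its core,
and continuous at `∅` along decreasing sequences. -/
def IsUpperProb [MeasurableSpace Ω] (V : Set Ω → ℝ) : Prop :=
  (∀ A B : Set Ω, MeasurableSet A → MeasurableSet B → A ⊆ B → V A ≤ V B) ∧
  V (∅ : Set Ω) = 0 ∧ V (univ : Set Ω) = 1 ∧
  (∀ A : Set Ω, MeasurableSet A →
    V A = sSup ((fun P : Measure Ω => (P A).toReal) '' UpperCore V)) ∧
  (∀ A : ℕ → Set Ω, (∀ n, MeasurableSet (A n)) → (∀ n, A (n + 1) ⊆ A n) →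
    (⋂ n, A n) = ∅ → Tendsto (fun n => V (A n)) atTop (𝓝 0))

/-- A `T`-invariant measurable set. -/
def InvSet [MeasurableSpace Ω] (T : Ω → Ω) (A : Set Ω) : Prop :=
  MeasurableSet A ∧ T ⁻¹' A = A

/-- A `T`-invariant probability measure (an element of `M(T)`). -/
def InvProb [MeasurableSpace Ω] (T : Ω → Ω) (P : Measure Ω) : Prop :=
  IsProbabilityMeasure P ∧ ∀ A : Set Ω, MeasurableSet A → P (T ⁻¹' A) = P A

/-- An ergodic `T`-invariant probability measure (an element of `M^e(T)`). -/
def ErgProb [MeasurableSpace Ω] (T : Ω → Ω) (P : Measure Ω) : Prop :=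
  InvProb T P ∧ ∀ A : Set Ω, InvSet T A → P A = 0 ∨ P A = 1

/-- The set function `V_i(A) = sup {P(A) : P ∈ core(V), P(Ai) = 1}`
(the sup over the empty set being `0`). -/
noncomputable def CompV [MeasurableSpace Ω] (V : Set Ω → ℝ) (Ai : Set Ω) :
    Set Ω → ℝ :=
  fun A => sSup ((fun P : Measure Ω => (P A).toReal) '' {P ∈ UpperCore V | P Ai = 1})

/-- `V` is of finite ergodic components with respect to `T`. -/
def IsFEC [MeasurableSpace Ω] (V : Set Ω → ℝ) (T : Ω → Ω) : Prop :=
  ∃ (n : ℕ) (A : Fin n → Set Ω),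
    (∀ i, InvSet T (A i)) ∧
    (univ : Set Ω) = ⋃ i, A i ∧
    (∀ i j, i ≠ j → Disjoint (A i) (A j)) ∧
    ∀ i, IsUpperProb (CompV V (A i)) ∧
      ∀ B : Set Ω, InvSet T B → CompV V (A i) B = 0 ∨ CompV V (A i) Bᶜ = 0

/-- `Q` is an extreme point of the set `S` of measures. -/
def IsExtremePt [MeasurableSpace Ω] (S : Set (Measure Ω)) (Q : Measure Ω) : Prop :=
  Q ∈ S ∧ ∀ P₁ ∈ S, ∀ P₂ ∈ S, ∀ a : ℝ≥0∞, 0 < a → a < 1 →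
    Q = a • P₁ + (1 - a) • P₂ → P₁ = Q ∧ P₂ = Q

/-- If `V(A) ∈ {0,1}` for every invariant set `A`, then every invariant set of
full capacity contains a "minimal" invariant subset of full capacity. -/
theorem stmt_4 [MeasurableSpace Ω] (V : Set Ω → ℝ) (T : Ω → Ω)
    (hV : IsUpperProb V) (hT : Measurable T)
    (hVinv : ∀ A : Set Ω, MeasurableSet A → V (T ⁻¹' A) = V A)
    (h01 : ∀ A : Set Ω, InvSet T A → V A = 0 ∨ V A = 1) :
    ∀ A : Set Ω, InvSet T A → V A = 1 →
      ∃ A' : Set Ω, InvSet T A' ∧ A' ⊆ A ∧ V A' = 1 ∧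
        ∀ B : Set Ω, InvSet T B → B ⊆ A' → V B = 1 → V (A' \ B) = 0 := by
  intro A hA hVA
  by_contra hcon
  push_neg at hcon
  have H : ∀ C : Set Ω, ∃ B : Set Ω,
      (InvSet T C ∧ C ⊆ A ∧ V C = 1) →
      InvSet T B ∧ B ⊆ C ∧ V B = 1 ∧ V (C \ B) = 1 := by
    intro C
    by_cases hC : InvSet T C ∧ C ⊆ A ∧ V C = 1
    · obtain ⟨B, hB1, hB2, hB3, hB4⟩ := hcon C hC.1 hC.2.1 hC.2.2
      refine ⟨B, fun _ => ⟨hB1, hB2, hB3, ?_⟩⟩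
      have hdiff : InvSet T (C \ B) := ⟨hC.1.1.diff hB1.1, by
        simp [Set.preimage_diff, hC.1.2, hB1.2]⟩
      rcases h01 _ hdiff with h | h
      · exact absurd h hB4
      · exact h
    · exact ⟨∅, fun h => absurd h hC⟩
  choose B hB using H
  set C : ℕ → Set Ω := fun n => Nat.rec A (fun _ Cn => Cn \ B Cn) n with hC
  have hCsucc : ∀ n, C (n + 1) = C n \ B (C n) := fun n => rfl
  have hCgood : ∀ n, InvSet T (C n) ∧ C n ⊆ A ∧ V (C n) = 1 := by
    intro n
    induction n with
    | zero => exact ⟨hA, subset_rfl, hVA⟩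
    | succ n ih =>
      obtain ⟨h1, h2, h3, h4⟩ := hB (C n) ih
      have hd : InvSet T (C n \ B (C n)) := ⟨ih.1.1.diff h1.1, by
        simp [Set.preimage_diff, ih.1.2, h1.2]⟩
      exact ⟨hd, Set.diff_subset.trans ih.2.1, h4⟩
  have hD := fun n => hB (C n) (hCgood n)
  set D : ℕ → Set Ω := fun n => B (C n) with hDdef
  have hCanti : ∀ n m, n ≤ m → C m ⊆ C n := by
    intro n m hnm
    induction hnm with
    | refl => exact subset_rfl
    | step h ih => exact (Set.diff_subset.trans ih)
  have hDdisj : ∀ n m, n < m → ∀ x, x ∈ D m → x ∉ D n := by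
    intro n m hnm x hxm hxn
    have h1 : x ∈ C m := (hD m).2.1 hxm
    have h2 : x ∈ C (n + 1) := hCanti (n + 1) m hnm h1
    rw [hCsucc n] at h2
    exact h2.2 hxn
  set R : ℕ → Set Ω := fun n => ⋃ k, D (n + k) with hRdef
  have hRmeas : ∀ n, MeasurableSet (R n) :=
    fun n => MeasurableSet.iUnion (fun k => (hD (n + k)).1.1)
  have hRdec : ∀ n, R (n + 1) ⊆ R n := by
    intro n x hx
    obtain ⟨s, ⟨k, hk⟩, hxs⟩ := hx
    refine Set.mem_iUnion.2 ⟨k + 1, ?_⟩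
    have he : n + 1 + k = n + (k + 1) := by omega
    simp only [← he, hk]
    exact hxs
  have hRempty : (⋂ n, R n) = ∅ := by
    ext x
    simp only [Set.mem_iInter, Set.mem_empty_iff_false, iff_false]
    intro hx
    obtain ⟨k₀, hk₀⟩ := Set.mem_iUnion.1 (hx 0)
    simp only [Nat.zero_add] at hk₀
    obtain ⟨k₁, hk₁⟩ := Set.mem_iUnion.1 (hx (k₀ + 1))
    exact hDdisj k₀ (k₀ + 1 + k₁) (by omega) x hk₁ hk₀
  have hcont := hV.2.2.2.2 R hRmeas hRdec hRempty
  have hge : ∀ n, (1 : ℝ) ≤ V (R n) := by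
    intro n
    have hsub : D n ⊆ R n := by
      intro x hx
      exact Set.mem_iUnion.2 ⟨0, by simpa using hx⟩
    have := hV.1 (D n) (R n) (hD n).1.1 (hRmeas n) hsub
    linarith [(hD n).2.2.1]
  have : (1 : ℝ) ≤ 0 := ge_of_tendsto hcont (Filter.Eventually.of_forall hge)
  linarith
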